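/- For each unlabelled binary tree T with n nodes, the set of permutations σ ∈ S_n whose binary search tree ABR(σ) has shape T equals the set of linear extensions of T viewed as a poset (via its standard binary search tree labelling), and this set is an interval of the right weak order on S_n. -/

import Mathlib

/-- Unlabelled binary trees. -/
inductive Tree0 where
  | leaf : Tree0
  | node : Tree0 → Tree0 → Tree0
deriving DecidableEq

/-- Labelled binary trees (labels in `ℕ`). -/
inductive BT where
  | leaf : BT
  | node : BT → ℕ → BT → BT
deriving DecidableEq

namespace BT

/-- Binary search tree insertion: `k` goes left if `≤` the root, right if `>`. -/
def bstInsert (k : ℕ) : BT → BT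
  | leaf => node leaf k leaf
  | node l x r => if k ≤ x then node (bstInsert k l) x r else node l x (bstInsert k r)

/-- Insert the letters of a word from right to left into an empty BST. -/
def abr (w : List ℕ) : BT := w.foldr bstInsert leaf

/-- Underlying unlabelled shape. -/
def shape : BT → Tree0
  | leaf => Tree0.leaf
  | node l _ r => Tree0.node (shape l) (shape r)

/-- Inorder list of labels. -/
def labels : BT → List ℕ
  | leaf => []
  | node l x r => labels l ++ x :: labels r

/-- The binary search tree property with distinct labels: every node label exceeds all
labels in its left subtree and is less than all labels in its right subtree. -/
def IsBST : BT → Prop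
  | leaf => True
  | node l x r => (∀ y ∈ labels l, y < x) ∧ (∀ y ∈ labels r, x < y) ∧ IsBST l ∧ IsBST r

/-- `a` lies (weakly) below `b` in the tree-as-poset: `a` is in the subtree rooted at
the node labelled `b`. -/
def Desc : BT → ℕ → ℕ → Prop
  | leaf, _, _ => False
  | node l x r, a, b =>
      (b = x ∧ (a = x ∨ a ∈ labels l ∨ a ∈ labels r)) ∨ Desc l a b ∨ Desc r a b

end BT

/-- The word of values of a permutation of `{1,…,n}`. -/
def wordOf {n : ℕ} (σ : Equiv.Perm (Fin n)) : List ℕ :=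
  List.ofFn fun i => (σ i : ℕ) + 1

/-- `σ` is a linear extension of the labelled tree `t`: strict descendants appear
before their ancestors in the word of `σ`. -/
def IsLinExt (t : BT) {n : ℕ} (σ : Equiv.Perm (Fin n)) : Prop :=
  ∀ a b : ℕ, BT.Desc t a b → a ≠ b →
    (wordOf σ).idxOf a < (wordOf σ).idxOf b

/-- Coinversions of a permutation: pairs of values `(x,y)`, `x < y`, with `y` appearing
before `x`. The right weak order is containment of coinversion sets. -/
def coinvSet {n : ℕ} (σ : Equiv.Perm (Fin n)) : Set (Fin n × Fin n) :=
  {p | p.1 < p.2 ∧ σ⁻¹ p.2 < σ⁻¹ p.1}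

namespace BT
open List

lemma labels_bstInsert (k : ℕ) (s : BT) : (labels (bstInsert k s)).Perm (k :: labels s) := by
  induction s with
  | leaf => simp [bstInsert, labels]
  | node l x r ihl ihr =>
    rw [bstInsert]
    by_cases h : k ≤ x
    · rw [if_pos h]
      show (labels (bstInsert k l) ++ x :: labels r).Perm _
      calc labels (bstInsert k l) ++ x :: labels r
          ~ (k :: labels l) ++ x :: labels r := ihl.append_right _
        _ = k :: (labels l ++ x :: labels r) := rfl
      -- done
    · rw [if_neg h]
      show (labels l ++ x :: labels (bstInsert k r)).Perm _
      calc labels l ++ x :: labels (bstInsert k r)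
          ~ labels l ++ x :: (k :: labels r) := ((ihr.cons x).append_left _)
        _ = (labels l ++ [x]) ++ k :: labels r := by simp
        _ ~ k :: ((labels l ++ [x]) ++ labels r) := List.perm_middle
        _ = k :: (labels l ++ x :: labels r) := by simp

lemma labels_abr (w : List ℕ) : (labels (abr w)).Perm w := by
  induction w with
  | nil => simp [abr, labels]
  | cons a w ih =>
    have : abr (a :: w) = bstInsert a (abr w) := rfl
    rw [this]
    exact (labels_bstInsert a (abr w)).trans (ih.cons a)

lemma isBST_bstInsert {s : BT} (hs : IsBST s) {k : ℕ} (hk : k ∉ labels s) :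
    IsBST (bstInsert k s) := by
  induction s with
  | leaf => simp [bstInsert, IsBST, labels]
  | node l x r ihl ihr =>
    obtain ⟨hl, hr, hbl, hbr⟩ := hs
    simp only [labels, mem_append, mem_cons, not_or] at hk
    obtain ⟨hkl, hkx, hkr⟩ := hk
    rw [bstInsert]
    by_cases h : k ≤ x
    · rw [if_pos h]
      refine ⟨?_, hr, ihl hbl hkl, hbr⟩
      intro y hy
      rcases List.mem_cons.mp ((labels_bstInsert k l).mem_iff.mp hy) with rfl | h1
      · exact lt_of_le_of_ne h hkx
      · exact hl y h1
    · rw [if_neg h]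
      refine ⟨hl, ?_, hbl, ihr hbr hkr⟩
      intro y hy
      rcases List.mem_cons.mp ((labels_bstInsert k r).mem_iff.mp hy) with rfl | h1
      · omega
      · exact hr y h1

lemma isBST_abr {w : List ℕ} (hw : w.Nodup) : IsBST (abr w) := by
  induction w with
  | nil => trivial
  | cons a w ih =>
    have h1 : a ∉ w := (List.nodup_cons.mp hw).1
    have h2 : IsBST (abr w) := ih (List.nodup_cons.mp hw).2
    show IsBST (bstInsert a (abr w))
    exact isBST_bstInsert h2 (fun hm => h1 ((labels_abr w).mem_iff.mp hm))

lemma sorted_labels {s : BT} (hs : IsBST s) : (labels s).Pairwise (· < ·) := by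
  induction s with
  | leaf => simp [labels]
  | node l x r ihl ihr =>
    obtain ⟨hl, hr, hbl, hbr⟩ := hs
    rw [labels]
    show List.Pairwise (· < ·) (labels l ++ x :: labels r)
    rw [List.pairwise_append]
    refine ⟨ihl hbl, ?_, ?_⟩
    · exact List.pairwise_cons.mpr ⟨fun y hy => hr y hy, ihr hbr⟩
    · intro a ha b hb
      rcases List.mem_cons.mp hb with rfl | hb
      · exact hl a ha
      · exact (hl a ha).trans (hr b hb)

lemma length_labels_of_shape : ∀ {s t : BT}, shape s = shape t →
    (labels s).length = (labels t).length := by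
  intro s
  induction s with
  | leaf =>
    intro t h
    cases t with
    | leaf => rfl
    | node l y r => simp [shape] at h
  | node l x r ihl ihr =>
    intro t h
    cases t with
    | leaf => simp [shape] at h
    | node l' y r' =>
      simp only [shape, Tree0.node.injEq] at h
      simp [labels, ihl h.1, ihr h.2]

lemma eq_of_shape_labels : ∀ {s t : BT}, shape s = shape t →
    labels s = labels t → s = t := by
  intro s
  induction s with
  | leaf =>
    intro t h _
    cases t with
    | leaf => rfl
    | node l y r => simp [shape] at h
  | node l x r ihl ihr =>
    intro t h hlab
    cases t with
    | leaf => simp [shape] at h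
    | node l' y r' =>
      simp only [shape, Tree0.node.injEq] at h
      have hlen := length_labels_of_shape h.1
      rw [labels, labels] at hlab
      have := List.append_inj hlab hlen
      obtain ⟨h1, h2⟩ := this
      obtain ⟨rfl, h3⟩ := List.cons_eq_cons.mp h2
      rw [ihl h.1 h1, ihr h.2 h3]

lemma mem_of_desc : ∀ {s : BT} {a b : ℕ}, Desc s a b → a ∈ labels s ∧ b ∈ labels s := by
  intro s
  induction s with
  | leaf => intro a b h; exact h.elim
  | node l x r ihl ihr =>
    intro a b h
    rcases h with ⟨rfl, h⟩ | h | h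
    · refine ⟨?_, by simp [labels]⟩
      rcases h with rfl | h | h
      · simp [labels]
      · simp [labels, h]
      · simp [labels, h]
    · obtain ⟨h1, h2⟩ := ihl h; simp [labels, h1, h2]
    · obtain ⟨h1, h2⟩ := ihr h; simp [labels, h1, h2]

lemma leaf_of_labels_nil : ∀ {s : BT}, labels s = [] → s = leaf := by
  intro s h
  cases s with
  | leaf => rfl
  | node l x r => simp [labels] at h

end BT
namespace BT
open List

lemma foldr_insert_node (w : List ℕ) (l r : BT) (x : ℕ) :
    w.foldr bstInsert (node l x r) =
      node ((w.filter (fun y => y ≤ x)).foldr bstInsert l) x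
        ((w.filter (fun y => ¬ y ≤ x)).foldr bstInsert r) := by
  induction w with
  | nil => simp
  | cons a w ih =>
    rw [List.foldr_cons, ih, bstInsert, List.filter_cons, List.filter_cons]
    by_cases h : a ≤ x
    · rw [if_pos h]
      simp [h, Nat.not_lt.mpr h]
    · rw [if_neg h]
      simp [h, Nat.not_le.mp h]

lemma abr_concat (w : List ℕ) (x : ℕ) :
    abr (w ++ [x]) = node (abr (w.filter (fun y => y ≤ x))) x
      (abr (w.filter (fun y => ¬ y ≤ x))) := by
  have : abr (w ++ [x]) = w.foldr bstInsert (node leaf x leaf) := by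
    rw [abr, List.foldr_append]; rfl
  rw [this, foldr_insert_node]; rfl

lemma before_of_sublist : ∀ {v w : List ℕ}, v <+ w → w.Nodup → ∀ {a b : ℕ},
    a ∈ v → b ∈ v → v.idxOf a < v.idxOf b → w.idxOf a < w.idxOf b := by
  intro v w hsub
  induction hsub with
  | slnil => intro _ a b ha _ _; cases ha
  | @cons v w c hsub ih =>
    intro hw a b ha hb h
    obtain ⟨hcw, hw'⟩ := List.nodup_cons.mp hw
    have hac : c ≠ a := fun e => hcw (e ▸ hsub.subset ha)
    have hbc : c ≠ b := fun e => hcw (e ▸ hsub.subset hb)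
    rw [List.idxOf_cons_ne _ hac, List.idxOf_cons_ne _ hbc]
    exact Nat.succ_lt_succ (ih hw' ha hb h)
  | @cons_cons v w c hsub ih =>
    intro hw a b ha hb h
    obtain ⟨hcw, hw'⟩ := List.nodup_cons.mp hw
    by_cases hac : c = a
    · subst hac
      have hbc : c ≠ b := by
        rintro rfl
        exact absurd h (lt_irrefl _)
      rw [List.idxOf_cons_self, List.idxOf_cons_ne _ hbc]
      exact Nat.succ_pos _
    · by_cases hbc : c = b
      · subst hbc
        rw [List.idxOf_cons_self] at h
        exact absurd h (Nat.not_lt_zero _)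
      · have ha' : a ∈ v := (List.mem_cons.mp ha).resolve_left (fun e => hac e.symm)
        have hb' : b ∈ v := (List.mem_cons.mp hb).resolve_left (fun e => hbc e.symm)
        rw [List.idxOf_cons_ne _ hac, List.idxOf_cons_ne _ hbc] at h ⊢
        exact Nat.succ_lt_succ (ih hw' ha' hb' (Nat.lt_of_succ_lt_succ h))

lemma before_iff_of_sublist {v w : List ℕ} (hsub : v <+ w) (hw : w.Nodup) {a b : ℕ}
    (ha : a ∈ v) (hb : b ∈ v) :
    v.idxOf a < v.idxOf b ↔ w.idxOf a < w.idxOf b := by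
  constructor
  · exact before_of_sublist hsub hw ha hb
  · intro h
    rcases Nat.lt_trichotomy (v.idxOf a) (v.idxOf b) with h1 | h1 | h1
    · exact h1
    · have : a = b := (List.idxOf_inj ha).mp h1
      subst this
      exact absurd h (lt_irrefl _)
    · exact absurd (before_of_sublist hsub hw hb ha h1) (Nat.lt_asymm h)

end BT

namespace BT
open List

lemma master : ∀ (N : ℕ) (w : List ℕ), w.length ≤ N → ∀ (t : BT), w.Nodup → IsBST t →
    w.Perm (labels t) →
    (abr w = t ↔ ∀ a b, Desc t a b → a ≠ b → w.idxOf a < w.idxOf b) := by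
  intro N
  induction N with
  | zero =>
    intro w hlen t _ _ hperm
    have hw : w = [] := List.length_eq_zero_iff.mp (Nat.le_zero.mp hlen)
    subst hw
    have ht : t = leaf := leaf_of_labels_nil hperm.symm.eq_nil
    subst ht
    exact ⟨fun _ a b hd _ => hd.elim, fun _ => rfl⟩
  | succ N ih =>
    intro w hlen t hnd hbst hperm
    rcases List.eq_nil_or_concat w with rfl | ⟨w', x, rfl⟩
    · have ht : t = leaf := leaf_of_labels_nil hperm.symm.eq_nil
      subst ht
      exact ⟨fun _ a b hd _ => hd.elim, fun _ => rfl⟩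
    · rw [List.concat_eq_append] at *
      obtain ⟨hnd', hxw'⟩ : w'.Nodup ∧ x ∉ w' := by
        rw [List.nodup_append] at hnd
        exact ⟨hnd.1, fun h => hnd.2.2 x h x (by simp) rfl⟩
      have hwnd : (w' ++ [x]).Nodup := hnd
      have hlen' : w'.length ≤ N := by
        simp only [List.length_append, List.length_singleton] at hlen; omega
      cases t with
      | leaf =>
        exfalso
        have := hperm.length_eq
        simp [labels] at this
      | node L y R =>
        obtain ⟨hLy, hyR, hbL, hbR⟩ := hbst
        have hlabnd : (labels (node L y R)).Nodup := hperm.nodup hnd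
        have hidx_x : (w' ++ [x]).idxOf x = w'.length := by
          rw [List.idxOf_append_of_notMem hxw']; simp
        have hidx_mem : ∀ a ∈ w', (w' ++ [x]).idxOf a < w'.length := by
          intro a ha
          rw [List.idxOf_append_of_mem ha]
          exact List.idxOf_lt_length_iff.mpr ha
        set Lf := w'.filter (fun z => z ≤ x) with hLf
        set Rf := w'.filter (fun z => ¬ z ≤ x) with hRf
        have habr : abr (w' ++ [x]) = node (abr Lf) x (abr Rf) := abr_concat w' x
        have hLf_sub : Lf <+ (w' ++ [x]) :=
          (List.filter_sublist (l := w')).trans (List.sublist_append_left w' [x])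
        have hRf_sub : Rf <+ (w' ++ [x]) :=
          (List.filter_sublist (l := w')).trans (List.sublist_append_left w' [x])
        have hLf_nd : Lf.Nodup := hnd'.filter _
        have hRf_nd : Rf.Nodup := hnd'.filter _
        have hLf_len : Lf.length ≤ N := (List.length_filter_le _ _).trans hlen'
        have hRf_len : Rf.length ≤ N := (List.length_filter_le _ _).trans hlen'
        constructor
        · -- forward
          intro habrt a b hdesc hne
          rw [habr] at habrt
          injection habrt with hLeq hxyeq hReq
          subst hxyeq
          have hpL : Lf.Perm (labels L) := by
            rw [← hLeq]; exact (labels_abr Lf).symm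
          have hpR : Rf.Perm (labels R) := by
            rw [← hReq]; exact (labels_abr Rf).symm
          have hlinL := (ih Lf hLf_len L hLf_nd hbL hpL).mp hLeq
          have hlinR := (ih Rf hRf_len R hRf_nd hbR hpR).mp hReq
          rcases hdesc with ⟨rfl, hmem⟩ | hd | hd
          · rcases hmem with rfl | hmem | hmem
            · exact absurd rfl hne
            · have haLf : a ∈ Lf := hpL.mem_iff.mpr hmem
              have haw' : a ∈ w' := (List.mem_filter.mp haLf).1
              rw [hidx_x]; exact hidx_mem a haw'
            · have haRf : a ∈ Rf := hpR.mem_iff.mpr hmem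
              have haw' : a ∈ w' := (List.mem_filter.mp haRf).1
              rw [hidx_x]; exact hidx_mem a haw'
          · obtain ⟨haL, hbL'⟩ := mem_of_desc hd
            have ha : a ∈ Lf := hpL.mem_iff.mpr haL
            have hb : b ∈ Lf := hpL.mem_iff.mpr hbL'
            exact (before_iff_of_sublist hLf_sub hwnd ha hb).mp (hlinL a b hd hne)
          · obtain ⟨haR, hbR'⟩ := mem_of_desc hd
            have ha : a ∈ Rf := hpR.mem_iff.mpr haR
            have hb : b ∈ Rf := hpR.mem_iff.mpr hbR'
            exact (before_iff_of_sublist hRf_sub hwnd ha hb).mp (hlinR a b hd hne)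
        · -- backward
          intro hlin
          have hxy : x = y := by
            by_contra hne
            have hxmem : x ∈ labels (node L y R) := hperm.subset (by simp)
            rw [labels] at hxmem
            have hidx_y : (w' ++ [x]).idxOf y < w'.length + 1 := by
              have hymem : y ∈ w' ++ [x] := hperm.mem_iff.mpr (by simp [labels])
              have := List.idxOf_lt_length_iff.mpr hymem
              simpa using this
            have hd : Desc (node L y R) x y := by
              rcases List.mem_append.mp hxmem with hx | hx
              · exact Or.inl ⟨rfl, Or.inr (Or.inl hx)⟩
              · rcases List.mem_cons.mp hx with h | hx
                · exact absurd h hne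
                · exact Or.inl ⟨rfl, Or.inr (Or.inr hx)⟩
            have := hlin x y hd hne
            rw [hidx_x] at this
            omega
          subst hxy
          have hperm' : (w' ++ [x]).Perm (labels L ++ x :: labels R) := by
            simpa [labels] using hperm
          have hpw' : w'.Perm (labels L ++ labels R) := by
            have h1 : (x :: w').Perm (w' ++ [x]) := by
              simpa using (List.perm_append_comm (l₁ := [x]) (l₂ := w'))
            have h2 : (labels L ++ x :: labels R).Perm (x :: (labels L ++ labels R)) :=
              List.perm_middle
            exact ((h1.trans hperm').trans h2).cons_inv
          have hpLf : Lf.Perm (labels L) := by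
            have h1 : Lf.Perm ((labels L ++ labels R).filter (fun z => z ≤ x)) :=
              hpw'.filter _
            have h2 : (labels L).filter (fun z => z ≤ x) = labels L :=
              List.filter_eq_self.mpr (fun a ha => by
                simpa using le_of_lt (hLy a ha))
            have h3 : (labels R).filter (fun z => z ≤ x) = [] :=
              List.filter_eq_nil_iff.mpr (fun a ha => by
                simpa using not_le.mpr (hyR a ha))
            rw [List.filter_append, h2, h3, List.append_nil] at h1
            exact h1
          have hpRf : Rf.Perm (labels R) := by
            have h1 : Rf.Perm ((labels L ++ labels R).filter (fun z => ¬ z ≤ x)) :=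
              hpw'.filter _
            have h2 : (labels R).filter (fun z => ¬ z ≤ x) = labels R :=
              List.filter_eq_self.mpr (fun a ha => by
                simpa using not_le.mpr (hyR a ha))
            have h3 : (labels L).filter (fun z => ¬ z ≤ x) = [] :=
              List.filter_eq_nil_iff.mpr (fun a ha => by
                simpa using le_of_lt (hLy a ha))
            rw [List.filter_append, h2, h3, List.nil_append] at h1
            exact h1
          have hlinLf : ∀ a b, Desc L a b → a ≠ b → Lf.idxOf a < Lf.idxOf b := by
            intro a b hd hne
            obtain ⟨haL, hbL'⟩ := mem_of_desc hd
            have ha : a ∈ Lf := hpLf.mem_iff.mpr haL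
            have hb : b ∈ Lf := hpLf.mem_iff.mpr hbL'
            exact (before_iff_of_sublist hLf_sub hwnd ha hb).mpr
              (hlin a b (Or.inr (Or.inl hd)) hne)
          have hlinRf : ∀ a b, Desc R a b → a ≠ b → Rf.idxOf a < Rf.idxOf b := by
            intro a b hd hne
            obtain ⟨haR, hbR'⟩ := mem_of_desc hd
            have ha : a ∈ Rf := hpRf.mem_iff.mpr haR
            have hb : b ∈ Rf := hpRf.mem_iff.mpr hbR'
            exact (before_iff_of_sublist hRf_sub hwnd ha hb).mpr
              (hlin a b (Or.inr (Or.inr hd)) hne)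
          have hLeq : abr Lf = L := (ih Lf hLf_len L hLf_nd hbL hpLf).mpr hlinLf
          have hReq : abr Rf = R := (ih Rf hRf_len R hRf_nd hbR hpRf).mpr hlinRf
          rw [habr, hLeq, hReq]

end BT

namespace BT
open List

lemma shape_iff_eq {w : List ℕ} {t : BT} (hnd : w.Nodup) (hbst : IsBST t)
    (hperm : w.Perm (labels t)) : shape (abr w) = shape t ↔ abr w = t := by
  constructor
  · intro h
    have h1 : (labels (abr w)).Pairwise (· < ·) := sorted_labels (isBST_abr hnd)
    have h2 : (labels t).Pairwise (· < ·) := sorted_labels hbst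
    have h3 : (labels (abr w)).Perm (labels t) := (labels_abr w).trans hperm
    exact eq_of_shape_labels h (h3.eq_of_pairwise (fun a b _ _ hx hy => absurd (hx.trans hy) (lt_irrefl _)) h1 h2)
  · intro h; rw [h]

/-- postorder: left, right, root -/
def post : BT → List ℕ
  | leaf => []
  | node l x r => post l ++ post r ++ [x]

/-- reversed postorder: right, left, root -/
def rpost : BT → List ℕ
  | leaf => []
  | node l x r => rpost r ++ rpost l ++ [x]

lemma post_perm : ∀ (t : BT), (post t).Perm (labels t) := by
  intro t
  induction t with
  | leaf => simp [post, labels]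
  | node l x r ihl ihr =>
    rw [post, labels]
    calc post l ++ post r ++ [x]
        ~ labels l ++ labels r ++ [x] := (ihl.append ihr).append_right _
      _ = labels l ++ (labels r ++ [x]) := by rw [List.append_assoc]
      _ ~ labels l ++ (x :: labels r) := by
          refine List.Perm.append_left _ ?_
          simpa using List.perm_append_comm (l₁ := labels r) (l₂ := [x])

lemma rpost_perm : ∀ (t : BT), (rpost t).Perm (labels t) := by
  intro t
  induction t with
  | leaf => simp [rpost, labels]
  | node l x r ihl ihr =>
    rw [rpost, labels]
    calc rpost r ++ rpost l ++ [x]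
        ~ labels r ++ labels l ++ [x] := (ihr.append ihl).append_right _
      _ ~ labels l ++ labels r ++ [x] := (List.perm_append_comm).append_right _
      _ = labels l ++ (labels r ++ [x]) := by rw [List.append_assoc]
      _ ~ labels l ++ (x :: labels r) := by
          refine List.Perm.append_left _ ?_
          simpa using List.perm_append_comm (l₁ := labels r) (l₂ := [x])

lemma abr_post {t : BT} (hbst : IsBST t) : abr (post t) = t := by
  induction t with
  | leaf => rfl
  | node l x r ihl ihr =>
    obtain ⟨hl, hr, hbl, hbr⟩ := hbst
    rw [post, abr_concat]
    have e1 : (post l ++ post r).filter (fun z => z ≤ x) = post l := by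
      rw [List.filter_append]
      have h1 : (post l).filter (fun z => z ≤ x) = post l :=
        List.filter_eq_self.mpr (fun a ha => by
          simpa using le_of_lt (hl a ((post_perm l).subset ha)))
      have h2 : (post r).filter (fun z => z ≤ x) = [] :=
        List.filter_eq_nil_iff.mpr (fun a ha => by
          simpa using not_le.mpr (hr a ((post_perm r).subset ha)))
      rw [h1, h2, List.append_nil]
    have e2 : (post l ++ post r).filter (fun z => ¬ z ≤ x) = post r := by
      rw [List.filter_append]
      have h1 : (post r).filter (fun z => ¬ z ≤ x) = post r :=
        List.filter_eq_self.mpr (fun a ha => by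
          simpa using not_le.mpr (hr a ((post_perm r).subset ha)))
      have h2 : (post l).filter (fun z => ¬ z ≤ x) = [] :=
        List.filter_eq_nil_iff.mpr (fun a ha => by
          simpa using le_of_lt (hl a ((post_perm l).subset ha)))
      rw [h1, h2, List.nil_append]
    rw [e1, e2, ihl hbl, ihr hbr]

lemma abr_rpost {t : BT} (hbst : IsBST t) : abr (rpost t) = t := by
  induction t with
  | leaf => rfl
  | node l x r ihl ihr =>
    obtain ⟨hl, hr, hbl, hbr⟩ := hbst
    rw [rpost, abr_concat]
    have e1 : (rpost r ++ rpost l).filter (fun z => z ≤ x) = rpost l := by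
      rw [List.filter_append]
      have h1 : (rpost l).filter (fun z => z ≤ x) = rpost l :=
        List.filter_eq_self.mpr (fun a ha => by
          simpa using le_of_lt (hl a ((rpost_perm l).subset ha)))
      have h2 : (rpost r).filter (fun z => z ≤ x) = [] :=
        List.filter_eq_nil_iff.mpr (fun a ha => by
          simpa using not_le.mpr (hr a ((rpost_perm r).subset ha)))
      rw [h1, h2, List.nil_append]
    have e2 : (rpost r ++ rpost l).filter (fun z => ¬ z ≤ x) = rpost r := by
      rw [List.filter_append]
      have h1 : (rpost r).filter (fun z => ¬ z ≤ x) = rpost r :=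
        List.filter_eq_self.mpr (fun a ha => by
          simpa using not_le.mpr (hr a ((rpost_perm r).subset ha)))
      have h2 : (rpost l).filter (fun z => ¬ z ≤ x) = [] :=
        List.filter_eq_nil_iff.mpr (fun a ha => by
          simpa using le_of_lt (hl a ((rpost_perm l).subset ha)))
      rw [h1, h2, List.append_nil]
    rw [e1, e2, ihl hbl, ihr hbr]

lemma idx_lt_of_append {u1 u2 : List ℕ} (hnd : (u1 ++ u2).Nodup) {a b : ℕ}
    (ha : a ∈ u1) (hb : b ∈ u2) :
    (u1 ++ u2).idxOf a < (u1 ++ u2).idxOf b := by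
  have hbu1 : b ∉ u1 := by
    rw [List.nodup_append] at hnd
    exact fun h => hnd.2.2 b h b hb rfl
  rw [List.idxOf_append_of_mem ha, List.idxOf_append_of_notMem hbu1]
  have := List.idxOf_lt_length_iff.mpr ha
  omega

end BT

namespace BT
open List

lemma labels_l_sublist (l : BT) (x : ℕ) (r : BT) : labels l <+ labels (node l x r) := by
  rw [labels]; exact List.sublist_append_left _ _

lemma labels_r_sublist (l : BT) (x : ℕ) (r : BT) : labels r <+ labels (node l x r) := by
  rw [labels]
  exact (List.sublist_cons_self x (labels r)).trans (List.sublist_append_right _ _)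

lemma post_before : ∀ {t : BT}, IsBST t → (labels t).Nodup → ∀ {a b : ℕ},
    a ∈ labels t → b ∈ labels t → a < b →
    (post t).idxOf b < (post t).idxOf a → Desc t b a := by
  intro t
  induction t with
  | leaf => intro _ _ a b ha; simp [labels] at ha
  | node l x r ihl ihr =>
    intro hbst hnd a b ha hb hab h
    obtain ⟨hl, hr, hbl, hbr⟩ := hbst
    have hndl : (labels l).Nodup := (labels_l_sublist l x r).nodup hnd
    have hndr : (labels r).Nodup := (labels_r_sublist l x r).nodup hnd
    have hndu : (post (node l x r)).Nodup := (post_perm _).symm.nodup hnd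
    rw [post] at hndu h
    have hxl : x ∉ post l := fun hm => lt_irrefl x (hl x ((post_perm l).subset hm))
    have hxr : x ∉ post r := fun hm => lt_irrefl x (hr x ((post_perm r).subset hm))
    have hsl : post l <+ post l ++ post r ++ [x] :=
      (List.sublist_append_left _ _).trans (List.sublist_append_left _ _)
    have hsr : post r <+ post l ++ post r ++ [x] :=
      (List.sublist_append_right _ _).trans (List.sublist_append_left _ _)
    rw [labels, List.mem_append, List.mem_cons] at ha hb
    rcases ha with haL | ha'
    · have haP : a ∈ post l := (post_perm l).mem_iff.mpr haL
      rcases hb with hbL | hb'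
      · have hbP : b ∈ post l := (post_perm l).mem_iff.mpr hbL
        have := (before_iff_of_sublist hsl hndu hbP haP).mpr h
        exact Or.inr (Or.inl (ihl hbl hndl haL hbL hab this))
      · rcases hb' with rfl | hbR
        · -- b = x : x is at the last position, cannot be before a
          exfalso
          have hxidx : (post l ++ post r ++ [b]).idxOf b = (post l ++ post r).length := by
            rw [List.idxOf_append_of_notMem (by
              rw [List.mem_append]; exact fun hc => hc.elim (fun h => hxl h) (fun h => hxr h))]
            simp
          have haidx : (post l ++ post r ++ [b]).idxOf a < (post l ++ post r).length := by
            rw [List.idxOf_append_of_mem (List.mem_append.mpr (Or.inl haP))]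
            exact List.idxOf_lt_length_iff.mpr (List.mem_append.mpr (Or.inl haP))
          omega
        · -- a in l, b in r : a occurs before b, contradiction
          exfalso
          have hbP : b ∈ post r ++ [x] := List.mem_append.mpr (Or.inl ((post_perm r).mem_iff.mpr hbR))
          have h2 : (post l ++ (post r ++ [x])).idxOf a < (post l ++ (post r ++ [x])).idxOf b :=
            idx_lt_of_append (by rw [← List.append_assoc]; exact hndu) haP hbP
          rw [← List.append_assoc] at h2
          omega
    · rcases ha' with rfl | haR
      · -- a = x
        rcases hb with hbL | hb'
        · exact absurd (hl b hbL) (by omega)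
        · rcases hb' with rfl | hbR
          · exact absurd hab (lt_irrefl _)
          · exact Or.inl ⟨rfl, Or.inr (Or.inr hbR)⟩
      · -- a in r
        rcases hb with hbL | hb'
        · exact absurd ((hl b hbL).trans (hr a haR)) (by omega)
        · rcases hb' with rfl | hbR
          · exact absurd (hr a haR) (by omega)
          · have haP : a ∈ post r := (post_perm r).mem_iff.mpr haR
            have hbP : b ∈ post r := (post_perm r).mem_iff.mpr hbR
            have := (before_iff_of_sublist hsr hndu hbP haP).mpr h
            exact Or.inr (Or.inr (ihr hbr hndr haR hbR hab this))

lemma rpost_after : ∀ {t : BT}, IsBST t → (labels t).Nodup → ∀ {a b : ℕ},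
    a ∈ labels t → b ∈ labels t → a < b → ¬ Desc t a b →
    (rpost t).idxOf b < (rpost t).idxOf a := by
  intro t
  induction t with
  | leaf => intro _ _ a b ha; simp [labels] at ha
  | node l x r ihl ihr =>
    intro hbst hnd a b ha hb hab hnd2
    obtain ⟨hl, hr, hbl, hbr⟩ := hbst
    have hndl : (labels l).Nodup := (labels_l_sublist l x r).nodup hnd
    have hndr : (labels r).Nodup := (labels_r_sublist l x r).nodup hnd
    have hndu : (rpost (node l x r)).Nodup := (rpost_perm _).symm.nodup hnd
    rw [rpost] at hndu ⊢
    have hxl : x ∉ rpost l := fun hm => lt_irrefl x (hl x ((rpost_perm l).subset hm))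
    have hxr : x ∉ rpost r := fun hm => lt_irrefl x (hr x ((rpost_perm r).subset hm))
    have hsl : rpost l <+ rpost r ++ rpost l ++ [x] :=
      (List.sublist_append_right _ _).trans (List.sublist_append_left _ _)
    have hsr : rpost r <+ rpost r ++ rpost l ++ [x] :=
      (List.sublist_append_left _ _).trans (List.sublist_append_left _ _)
    rw [labels, List.mem_append, List.mem_cons] at ha hb
    rcases ha with haL | ha'
    · have haP : a ∈ rpost l := (rpost_perm l).mem_iff.mpr haL
      rcases hb with hbL | hb'
      · -- both in l
        have hbP : b ∈ rpost l := (rpost_perm l).mem_iff.mpr hbL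
        have hd : ¬ Desc l a b := fun hd => hnd2 (Or.inr (Or.inl hd))
        exact (before_iff_of_sublist hsl hndu hbP haP).mp (ihl hbl hndl haL hbL hab hd)
      · rcases hb' with rfl | hbR
        · -- b = x : but a in l is a descendant of x, contradiction
          exact absurd (Or.inl ⟨rfl, Or.inr (Or.inl haL)⟩) hnd2
        · -- a in l, b in r : b is in the first block
          have hbP : b ∈ rpost r := (rpost_perm r).mem_iff.mpr hbR
          have haP' : a ∈ rpost l ++ [x] := List.mem_append.mpr (Or.inl haP)
          have h2 : (rpost r ++ (rpost l ++ [x])).idxOf b <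
              (rpost r ++ (rpost l ++ [x])).idxOf a :=
            idx_lt_of_append (by rw [← List.append_assoc]; exact hndu) hbP haP'
          rw [← List.append_assoc] at h2
          exact h2
    · rcases ha' with rfl | haR
      · -- a = x
        rcases hb with hbL | hb'
        · exact absurd (hl b hbL) (by omega)
        · rcases hb' with rfl | hbR
          · exact absurd hab (lt_irrefl _)
          · -- b in r, a = x at the end
            have hbP : b ∈ rpost r ++ rpost l := List.mem_append.mpr (Or.inl ((rpost_perm r).mem_iff.mpr hbR))
            exact idx_lt_of_append hndu hbP (by simp)
      · -- a in r
        rcases hb with hbL | hb'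
        · exact absurd ((hl b hbL).trans (hr a haR)) (by omega)
        · rcases hb' with rfl | hbR
          · exact absurd (hr a haR) (by omega)
          · have haP : a ∈ rpost r := (rpost_perm r).mem_iff.mpr haR
            have hbP : b ∈ rpost r := (rpost_perm r).mem_iff.mpr hbR
            have hd : ¬ Desc r a b := fun hd => hnd2 (Or.inr (Or.inr hd))
            exact (before_iff_of_sublist hsr hndu hbP haP).mp (ihr hbr hndr haR hbR hab hd)

end BT

open List in
lemma wordOf_nodup {n : ℕ} (σ : Equiv.Perm (Fin n)) : (wordOf σ).Nodup := by
  rw [wordOf, List.nodup_ofFn]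
  intro i j h
  simp only [add_left_inj] at h
  exact σ.injective (Fin.val_injective h)

open List in
lemma wordOf_perm_range {n : ℕ} (σ : Equiv.Perm (Fin n)) :
    (wordOf σ).Perm (List.range' 1 n) := by
  apply (List.perm_ext_iff_of_nodup (wordOf_nodup σ) (List.nodup_range' (s := 1) (n := n))).mpr
  intro a
  rw [wordOf, List.mem_range'_1]
  constructor
  · intro ha
    obtain ⟨i, hi⟩ := List.mem_ofFn.mp ha
    have hi' : (σ i : ℕ) + 1 = a := hi
    have := (σ i).isLt
    omega
  · rintro ⟨h1, h2⟩
    apply List.mem_ofFn.mpr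
    have hlt : a - 1 < n := by omega
    refine ⟨σ⁻¹ ⟨a - 1, hlt⟩, ?_⟩
    show (σ (σ⁻¹ ⟨a - 1, hlt⟩) : ℕ) + 1 = a
    rw [(show ∀ x, σ (σ⁻¹ x) = x from σ.apply_symm_apply)]
    show a - 1 + 1 = a
    omega

open List in
lemma indexOf_wordOf {n : ℕ} (σ : Equiv.Perm (Fin n)) (j : Fin n) :
    (wordOf σ).idxOf ((σ j : ℕ) + 1) = (j : ℕ) := by
  have hnd := wordOf_nodup σ
  have hj : (j : ℕ) < (wordOf σ).length := by simp [wordOf]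
  have he : (wordOf σ)[(j : ℕ)]'hj = (σ j : ℕ) + 1 := by simp [wordOf]
  rw [← he]
  exact hnd.idxOf_getElem _ _

open List in
lemma indexOf_wordOf_inv {n : ℕ} (σ : Equiv.Perm (Fin n)) (p : Fin n) :
    (wordOf σ).idxOf ((p : ℕ) + 1) = ((σ⁻¹ p : Fin n) : ℕ) := by
  have := indexOf_wordOf σ (σ⁻¹ p)
  rwa [(show ∀ x, σ (σ⁻¹ x) = x from σ.apply_symm_apply)] at this

lemma mem_coinv_iff {n : ℕ} (σ : Equiv.Perm (Fin n)) (p q : Fin n) :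
    (p, q) ∈ coinvSet σ ↔ p < q ∧
      (wordOf σ).idxOf ((q : ℕ) + 1) < (wordOf σ).idxOf ((p : ℕ) + 1) := by
  have h0 : ((p, q) ∈ coinvSet σ) ↔ (p < q ∧ σ⁻¹ q < σ⁻¹ p) := Iff.rfl
  rw [h0, indexOf_wordOf_inv, indexOf_wordOf_inv]
  exact and_congr Iff.rfl ⟨Fin.lt_def.mp, Fin.lt_def.mpr⟩

open List in
lemma exists_perm_word {n : ℕ} (u : List ℕ) (hu : u.Perm (List.range' 1 n)) :
    ∃ σ : Equiv.Perm (Fin n), wordOf σ = u := by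
  have hlen : u.length = n := by simpa using hu.length_eq
  subst hlen
  have hnd : u.Nodup := hu.symm.nodup (List.nodup_range' (s := 1) (n := u.length))
  have hmem : ∀ a ∈ u, 1 ≤ a ∧ a < 1 + u.length := fun a ha =>
    List.mem_range'_1.mp (hu.subset ha)
  have hget : ∀ i : Fin u.length, 1 ≤ u.get i ∧ u.get i < 1 + u.length := fun i =>
    hmem _ (u.get_mem i)
  set f : Fin u.length → Fin u.length :=
    fun i => ⟨u.get i - 1, by have := hget i; omega⟩ with hf
  have hinj : Function.Injective f := by
    intro i j hij
    apply hnd.get_inj_iff.mp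
    have h1 := hget i
    have h2 := hget j
    have : u.get i - 1 = u.get j - 1 := congrArg Fin.val hij
    omega
  refine ⟨Equiv.ofBijective f (Finite.injective_iff_bijective.mp hinj), ?_⟩
  rw [wordOf]
  have he : (fun i => (((Equiv.ofBijective f (Finite.injective_iff_bijective.mp hinj)) i :
      Fin u.length) : ℕ) + 1) = fun i => u.get i := by
    funext i
    have h1 := hget i
    show (f i : ℕ) + 1 = u.get i
    rw [hf]
    simp only []
    omega
  rw [he, List.ofFn_get]

open BT
/-- For a binary tree with its standard binary search tree labelling
`t` on `{1,…,n}`, the permutations whose BST insertion has the shape of `t` are exactly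
the linear extensions of `t` viewed as a poset, and this set is an interval of the
right weak order. -/
theorem sylvester_class_is_linear_extensions (n : ℕ) (t : BT)
    (hbst : BT.IsBST t) (hlabels : (BT.labels t).Perm (List.range' 1 n)) :
    (∀ σ : Equiv.Perm (Fin n),
        BT.shape (BT.abr (wordOf σ)) = BT.shape t ↔ IsLinExt t σ) ∧
    (∃ mσ Mσ : Equiv.Perm (Fin n), ∀ σ : Equiv.Perm (Fin n),
        BT.shape (BT.abr (wordOf σ)) = BT.shape t ↔
          (coinvSet mσ ⊆ coinvSet σ ∧ coinvSet σ ⊆ coinvSet Mσ)) := by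
  have hndlab : (labels t).Nodup := hlabels.symm.nodup (List.nodup_range' (s := 1) (n := n))
  have hlab_range : ∀ v ∈ labels t, 1 ≤ v ∧ v < 1 + n := fun v hv =>
    List.mem_range'_1.mp (hlabels.subset hv)
  have part1 : ∀ σ : Equiv.Perm (Fin n),
      BT.shape (BT.abr (wordOf σ)) = BT.shape t ↔ IsLinExt t σ := by
    intro σ
    have hw : (wordOf σ).Perm (labels t) := (wordOf_perm_range σ).trans hlabels.symm
    have hnd := wordOf_nodup σ
    rw [shape_iff_eq hnd hbst hw]
    exact master (wordOf σ).length (wordOf σ) le_rfl t hnd hbst hw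
  refine ⟨part1, ?_⟩
  obtain ⟨mσ, hm⟩ := exists_perm_word (n := n) (post t) ((post_perm t).trans hlabels)
  obtain ⟨Mσ, hM⟩ := exists_perm_word (n := n) (rpost t) ((rpost_perm t).trans hlabels)
  have hnd_post : (post t).Nodup := (post_perm t).symm.nodup hndlab
  have hnd_rpost : (rpost t).Nodup := (rpost_perm t).symm.nodup hndlab
  have hmlin : ∀ a b, Desc t a b → a ≠ b → (post t).idxOf a < (post t).idxOf b :=
    (master (post t).length (post t) le_rfl t hnd_post hbst
      (post_perm t)).mp (abr_post hbst)
  have hMlin : ∀ a b, Desc t a b → a ≠ b → (rpost t).idxOf a < (rpost t).idxOf b :=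
    (master (rpost t).length (rpost t) le_rfl t hnd_rpost hbst
      (rpost_perm t)).mp (abr_rpost hbst)
  refine ⟨mσ, Mσ, fun σ => (part1 σ).trans ?_⟩
  constructor
  · -- IsLinExt → interval
    intro hle
    constructor
    · rintro ⟨p, q⟩ hpq
      rw [mem_coinv_iff, hm] at hpq
      rw [mem_coinv_iff]
      obtain ⟨hpq1, hpq2⟩ := hpq
      have hab : (p : ℕ) + 1 < (q : ℕ) + 1 := by
        have := Fin.lt_def.mp hpq1; omega
      have ha : (p : ℕ) + 1 ∈ labels t := by
        apply hlabels.mem_iff.mpr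
        rw [List.mem_range'_1]
        have := p.isLt; omega
      have hb : (q : ℕ) + 1 ∈ labels t := by
        apply hlabels.mem_iff.mpr
        rw [List.mem_range'_1]
        have := q.isLt; omega
      have hdesc : Desc t ((q : ℕ) + 1) ((p : ℕ) + 1) :=
        post_before hbst hndlab ha hb hab hpq2
      exact ⟨hpq1, hle _ _ hdesc (by omega)⟩
    · rintro ⟨p, q⟩ hpq
      rw [mem_coinv_iff] at hpq
      rw [mem_coinv_iff, hM]
      obtain ⟨hpq1, hpq2⟩ := hpq
      have hab : (p : ℕ) + 1 < (q : ℕ) + 1 := by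
        have := Fin.lt_def.mp hpq1; omega
      have ha : (p : ℕ) + 1 ∈ labels t := by
        apply hlabels.mem_iff.mpr
        rw [List.mem_range'_1]
        have := p.isLt; omega
      have hb : (q : ℕ) + 1 ∈ labels t := by
        apply hlabels.mem_iff.mpr
        rw [List.mem_range'_1]
        have := q.isLt; omega
      have hnd2 : ¬ Desc t ((p : ℕ) + 1) ((q : ℕ) + 1) := by
        intro hd
        have := hle _ _ hd (by omega)
        omega
      exact ⟨hpq1, rpost_after hbst hndlab ha hb hab hnd2⟩
  · -- interval → IsLinExt
    rintro ⟨h1, h2⟩ a b hdesc hne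
    obtain ⟨ha, hb⟩ := mem_of_desc hdesc
    obtain ⟨ha1, ha2⟩ := hlab_range a ha
    obtain ⟨hb1, hb2⟩ := hlab_range b hb
    rcases lt_or_gt_of_ne hne with hab | hab
    · -- a < b : use the max element
      by_contra hcon
      have hamem : a ∈ wordOf σ := (wordOf_perm_range σ).mem_iff.mpr
        (List.mem_range'_1.mpr ⟨ha1, ha2⟩)
      have hbmem : b ∈ wordOf σ := (wordOf_perm_range σ).mem_iff.mpr
        (List.mem_range'_1.mpr ⟨hb1, hb2⟩)
      have hne_idx : (wordOf σ).idxOf a ≠ (wordOf σ).idxOf b :=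
        fun h => hne ((List.idxOf_inj hamem).mp h)
      have hba : (wordOf σ).idxOf b < (wordOf σ).idxOf a := by omega
      set p : Fin n := ⟨a - 1, by omega⟩ with hp
      set q : Fin n := ⟨b - 1, by omega⟩ with hq
      have hpa : (p : ℕ) + 1 = a := by rw [hp]; show a - 1 + 1 = a; omega
      have hqb : (q : ℕ) + 1 = b := by rw [hq]; show b - 1 + 1 = b; omega
      have hmemc : (p, q) ∈ coinvSet σ := by
        rw [mem_coinv_iff, hpa, hqb]
        exact ⟨by rw [Fin.lt_def]; show a - 1 < b - 1; omega, hba⟩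
      have := h2 hmemc
      rw [mem_coinv_iff, hM, hpa, hqb] at this
      have := hMlin a b hdesc hne
      omega
    · -- b < a : use the min element
      set p : Fin n := ⟨b - 1, by omega⟩ with hp
      set q : Fin n := ⟨a - 1, by omega⟩ with hq
      have hpb : (p : ℕ) + 1 = b := by rw [hp]; show b - 1 + 1 = b; omega
      have hqa : (q : ℕ) + 1 = a := by rw [hq]; show a - 1 + 1 = a; omega
      have hmemc : (p, q) ∈ coinvSet mσ := by
        rw [mem_coinv_iff, hm, hpb, hqa]
        exact ⟨by rw [Fin.lt_def]; show b - 1 < a - 1; omega, hmlin a b hdesc hne⟩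
      have := h1 hmemc
      rw [mem_coinv_iff, hpb, hqa] at this
      exact this.2
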